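/- Define S1(x,n,j) = Σ_{k=1}^{n} P(k)·x_{j−k}·x_{j−k+1}·∏_{m=j−k+2}^{j+1}(1−x_m) + Σ_{k=2}^{n} P(k+1)·(1−x_{j−k})·x_{j−k+1}·∏_{m=j−k+2}^{j+1}(1−x_m), where P(k)=1 if k is even and 0 if k is odd. Let x ∈ {0,1}^ℤ and y = F156(x). Then S1(y,n,j) = S1(x,n+1,j) + x_{j−2}·x_{j−1}·x_j·(1−x_{j+1})·x_{j+2} − x_{j−2}·x_{j−1}·(1−x_j)·(1−x_{j+1}). -/

import Mathlib

/-- Polynomial form of the local function of rule 156. -/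
def f156 (a b c : ℤ) : ℤ := (1 - a) * b + a * b * c + a * (1 - b) * (1 - c)

/-- Even-parity indicator: 1 if k is even, 0 if k is odd. -/
def Par (k : ℕ) : ℤ := if Even k then 1 else 0

/-- Vertical strips under diagonal lines. -/
noncomputable def S1 (x : ℤ → ℤ) (n : ℕ) (j : ℤ) : ℤ :=
  (∑ k ∈ Finset.Icc 1 n,
      Par k * x (j - k) * x (j - k + 1) * ∏ m ∈ Finset.Icc (j - k + 2) (j + 1), (1 - x m)) +
    ∑ k ∈ Finset.Icc 2 n,
      Par (k + 1) * (1 - x (j - k)) * x (j - k + 1) *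
        ∏ m ∈ Finset.Icc (j - k + 2) (j + 1), (1 - x m)

lemma parTwo (k : ℕ) : Par (k+2) = Par k := by simp [Par, Nat.even_add]

lemma prodIccBot (f : ℤ → ℤ) (a c : ℤ) (h : a ≤ c) :
    ∏ m ∈ Finset.Icc a c, f m = f a * ∏ m ∈ Finset.Icc (a+1) c, f m := by
  have e : Finset.Icc a c = insert a (Finset.Icc (a+1) c) := by
    ext m; simp only [Finset.mem_Icc, Finset.mem_insert]; omega
  rw [e, Finset.prod_insert (by simp only [Finset.mem_Icc]; omega)]

section pts
variable (x : ℤ → ℤ) (hx : ∀ i, x i = 0 ∨ x i = 1)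
    (y : ℤ → ℤ) (hy : ∀ i, y i = f156 (x (i - 1)) (x i) (x (i + 1)))
include hx hy

lemma pt1 (a : ℤ) : y a * (1 - x a) * (1 - x (a+1)) = x (a-1) * (1 - x a) * (1 - x (a+1)) := by
  rw [hy a]
  rcases hx (a-1) with h1|h1 <;> rcases hx a with h2|h2 <;> rcases hx (a+1) with h3|h3 <;>
    simp [f156, h1, h2, h3]

lemma pt2 (a : ℤ) : (1 - y a) * (1 - x a) * (1 - x (a+1))
    = (1 - x (a-1)) * (1 - x a) * (1 - x (a+1)) := by
  rw [hy a]
  rcases hx (a-1) with h1|h1 <;> rcases hx a with h2|h2 <;> rcases hx (a+1) with h3|h3 <;>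
    simp [f156, h1, h2, h3]

lemma pt3 (a : ℤ) : y a * x a * (1 - x (a+1)) = (1 - x (a-1)) * x a * (1 - x (a+1)) := by
  rw [hy a]
  rcases hx (a-1) with h1|h1 <;> rcases hx a with h2|h2 <;> rcases hx (a+1) with h3|h3 <;>
    simp [f156, h1, h2, h3]

lemma pt4 (a : ℤ) : (1 - y a) * x a * (1 - x (a+1)) = x (a-1) * x a * (1 - x (a+1)) := by
  rw [hy a]
  rcases hx (a-1) with h1|h1 <;> rcases hx a with h2|h2 <;> rcases hx (a+1) with h3|h3 <;>
    simp [f156, h1, h2, h3]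

lemma lemD (j : ℤ) : ∀ a : ℤ, a ≤ j - 1 →
    ∏ m ∈ Finset.Icc a (j+1), (1 - y m) = (1 - x (a-1)) * ∏ m ∈ Finset.Icc a (j+1), (1 - x m) := by
  have key : ∀ L : ℕ, ∀ a : ℤ, a = j - 1 - (L:ℤ) →
      ∏ m ∈ Finset.Icc a (j+1), (1 - y m)
      = (1 - x (a-1)) * ∏ m ∈ Finset.Icc a (j+1), (1 - x m) := by
    intro L
    induction L with
    | zero =>
      intro a ha
      push_cast at ha
      subst ha
      norm_num
      rw [prodIccBot _ _ _ (by omega), prodIccBot _ _ _ (by omega),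
        show j - 1 + 1 + 1 = j + 1 by ring, Finset.Icc_self, Finset.prod_singleton,
        prodIccBot (fun m => 1 - x m) _ _ (by omega), prodIccBot (fun m => 1 - x m) _ _ (by omega),
        show j - 1 + 1 + 1 = j + 1 by ring, Finset.Icc_self, Finset.prod_singleton]
      simp only [show j - 1 + 1 = j by ring]
      rw [hy (j-1), hy j, hy (j+1)]
      simp only [show j - 1 - 1 = j - 2 by ring, show j - 1 + 1 = j by ring,
        show j + 1 - 1 = j by ring, show j + 1 + 1 = j + 2 by ring]
      rcases hx (j-2) with h1|h1 <;> rcases hx (j-1) with h2|h2 <;> rcases hx j with h3|h3 <;>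
        rcases hx (j+1) with h4|h4 <;> rcases hx (j+2) with h5|h5 <;>
        simp [f156, h1, h2, h3, h4, h5]
    | succ L ih =>
      intro a ha
      push_cast at ha
      have hih := ih (a+1) (by omega)
      have hax : ∏ m ∈ Finset.Icc (a+1) (j+1), (1 - x m)
          = (1 - x (a+1)) * ∏ m ∈ Finset.Icc (a+1+1) (j+1), (1 - x m) :=
        prodIccBot (fun m => 1 - x m) _ _ (by omega)
      rw [prodIccBot (fun m => 1 - y m) _ _ (by omega),
        prodIccBot (fun m => 1 - x m) a _ (by omega), hih, hax,
        show a + 1 - 1 = a by ring]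
      have h2 := pt2 x hx y hy a
      linear_combination (∏ m ∈ Finset.Icc (a+1+1) (j+1), (1 - x m)) * h2
  intro a ha
  exact key (j-1-a).toNat a (by omega)

lemma lemA (j a : ℤ) (haj : a ≤ j - 3) :
    y a * y (a+1) * ∏ m ∈ Finset.Icc (a+2) (j+1), (1 - y m)
    = (1 - x (a-1)) * x a * ∏ m ∈ Finset.Icc (a+1) (j+1), (1 - x m) := by
  rw [lemD x hx y hy j (a+2) (by omega), show a + 2 - 1 = a + 1 by ring,
    prodIccBot (fun m => 1 - x m) (a+1) _ (by omega), show a + 1 + 1 = a + 2 by ring,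
    prodIccBot (fun m => 1 - x m) (a+2) _ (by omega)]
  have p1 := pt1 x hx y hy (a+1)
  have p3 := pt3 x hx y hy a
  rw [show a + 1 - 1 = a by ring, show a + 1 + 1 = a + 2 by ring] at p1
  linear_combination (∏ m ∈ Finset.Icc (a+2+1) (j+1), (1 - x m)) * (y a * p1 + (1 - x (a+2)) * p3)

lemma lemB (j a : ℤ) (haj : a ≤ j - 3) :
    (1 - y a) * y (a+1) * ∏ m ∈ Finset.Icc (a+2) (j+1), (1 - y m)
    = x (a-1) * x a * ∏ m ∈ Finset.Icc (a+1) (j+1), (1 - x m) := by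
  rw [lemD x hx y hy j (a+2) (by omega), show a + 2 - 1 = a + 1 by ring,
    prodIccBot (fun m => 1 - x m) (a+1) _ (by omega), show a + 1 + 1 = a + 2 by ring,
    prodIccBot (fun m => 1 - x m) (a+2) _ (by omega)]
  have p1 := pt1 x hx y hy (a+1)
  have p4 := pt4 x hx y hy a
  rw [show a + 1 - 1 = a by ring, show a + 1 + 1 = a + 2 by ring] at p1
  linear_combination (∏ m ∈ Finset.Icc (a+2+1) (j+1), (1 - x m)) * ((1 - y a) * p1 + (1 - x (a+2)) * p4)

end pts

theorem stmt12 (x : ℤ → ℤ) (hx : ∀ i, x i = 0 ∨ x i = 1)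
    (y : ℤ → ℤ) (hy : ∀ i, y i = f156 (x (i - 1)) (x i) (x (i + 1)))
    (n : ℕ) (hn : 2 ≤ n) (j : ℤ) :
    S1 y n j = S1 x (n + 1) j +
      x (j - 2) * x (j - 1) * x j * (1 - x (j + 1)) * x (j + 2) -
      x (j - 2) * x (j - 1) * (1 - x j) * (1 - x (j + 1)) := by
  induction n, hn using Nat.le_induction with
  | base =>
    unfold S1
    rw [show Finset.Icc 1 2 = ({1, 2} : Finset ℕ) from by decide,
      show Finset.Icc 2 2 = ({2} : Finset ℕ) from by decide,
      show Finset.Icc 1 (2+1) = ({1, 2, 3} : Finset ℕ) from by decide,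
      show Finset.Icc 2 (2+1) = ({2, 3} : Finset ℕ) from by decide]
    simp only [Finset.sum_insert, Finset.mem_insert, Finset.mem_singleton, Finset.sum_singleton]
    norm_num [Par, Nat.even_iff]
    rw [show j - 3 + 2 = j - 1 by ring, show j - 2 + 1 = j - 1 by ring,
      show j - 3 + 1 = j - 2 by ring,
      prodIccBot (fun m => 1 - y m) j _ (by omega),
      prodIccBot (fun m => 1 - x m) (j-1) _ (by omega), show j - 1 + 1 = j by ring,
      prodIccBot (fun m => 1 - x m) j _ (by omega)]
    simp only [Finset.Icc_self, Finset.prod_singleton]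
    rw [hy (j-2), hy (j-1), hy j, hy (j+1)]
    simp only [show j - 2 - 1 = j - 3 by ring, show j - 2 + 1 = j - 1 by ring,
      show j - 1 - 1 = j - 2 by ring, show j - 1 + 1 = j by ring,
      show j + 1 - 1 = j by ring, show j + 1 + 1 = j + 2 by ring]
    rcases hx (j-3) with h1|h1 <;> rcases hx (j-2) with h2|h2 <;> rcases hx (j-1) with h3|h3 <;>
      rcases hx j with h4|h4 <;> rcases hx (j+1) with h5|h5 <;> rcases hx (j+2) with h6|h6 <;>
      simp [f156, h1, h2, h3, h4, h5, h6]
  | succ n hn ih =>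
    have hA := lemA x hx y hy j (j - ((n:ℤ)+1)) (by omega)
    have hB := lemB x hx y hy j (j - ((n:ℤ)+1)) (by omega)
    unfold S1 at ih ⊢
    rw [Finset.sum_Icc_succ_top (by omega : 1 ≤ n+1), Finset.sum_Icc_succ_top (by omega : 2 ≤ n+1),
      Finset.sum_Icc_succ_top (by omega : 1 ≤ n+1+1), Finset.sum_Icc_succ_top (by omega : 2 ≤ n+1+1)]
    push_cast
    simp only [show j - ((n:ℤ) + 1 + 1) = j - ((n:ℤ) + 1) - 1 by ring,
      show j - ((n:ℤ) + 1) - 1 + 1 = j - ((n:ℤ) + 1) by ring,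
      show j - ((n:ℤ) + 1) - 1 + 2 = j - ((n:ℤ) + 1) + 1 by ring]
    have hp3 : Par (n+1+1+1) = Par (n+1) := by simp [Par, Nat.even_add]
    rw [hp3]
    linear_combination ih + Par (n+1) * hA + Par (n+1+1) * hB
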